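/- Let Q be an inverse quantal frame and X a Q-sheaf. If s and t are principal sections of X, then ⟨s,t⟩ is a partial unit of Q, i.e., ⟨s,t⟩ ∈ Q_I. -/

import Mathlib

/-- A unital involutive quantale: a complete lattice with an associative
multiplication preserving arbitrary joins in each variable, a unit `e`, and a
join-preserving involution. -/
structure IQuantale (Q : Type*) [CompleteLattice Q] where
  mul : Q → Q → Q
  e : Q
  star : Q → Q
  mul_assoc : ∀ a b c, mul (mul a b) c = mul a (mul b c)
  sSup_mul : ∀ (S : Set Q) (b : Q), mul (sSup S) b = ⨆ a ∈ S, mul a b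
  mul_sSup : ∀ (a : Q) (S : Set Q), mul a (sSup S) = ⨆ b ∈ S, mul a b
  e_mul : ∀ a, mul e a = a
  mul_e : ∀ a, mul a e = a
  star_star : ∀ a, star (star a) = a
  star_mul : ∀ a b, star (mul a b) = mul (star b) (star a)
  star_sSup : ∀ S : Set Q, star (sSup S) = ⨆ a ∈ S, star a

/-- The set of partial units of a quantale. -/
def IQuantale.PU {Q : Type*} [CompleteLattice Q] (Qs : IQuantale Q) : Set Q :=
  {s | Qs.mul s (Qs.star s) ≤ Qs.e ∧ Qs.mul (Qs.star s) s ≤ Qs.e}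

/-- An inverse quantal frame: a unital involutive quantale which is a frame,
has a stable support, and whose partial units join to the top. -/
structure InverseQuantalFrame (Q : Type*) [Order.Frame Q] extends IQuantale Q where
  supp : Q → Q
  supp_le_e : ∀ a, supp a ≤ e
  supp_sSup : ∀ S : Set Q, supp (sSup S) = ⨆ a ∈ S, supp a
  supp_le_mul_star : ∀ a, supp a ≤ mul a (star a)
  le_supp_mul : ∀ a, a ≤ mul (supp a) a
  supp_stable : ∀ b a, b ≤ e → supp (mul b a) = mul b (supp a)
  sSup_PU : sSup {s | mul s (star s) ≤ e ∧ mul (star s) s ≤ e} = ⊤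

/-- A left module over a quantale: a complete lattice with a unital associative
action preserving arbitrary joins in each variable. -/
structure QuantaleModule {Q : Type*} [CompleteLattice Q] (Qs : IQuantale Q)
    (X : Type*) [CompleteLattice X] where
  act : Q → X → X
  act_mul : ∀ a b x, act (Qs.mul a b) x = act a (act b x)
  act_e : ∀ x, act Qs.e x = x
  sSup_act : ∀ (S : Set Q) (x : X), act (sSup S) x = ⨆ a ∈ S, act a x
  act_sSup : ∀ (a : Q) (S : Set X), act a (sSup S) = ⨆ x ∈ S, act a x

/-- A pre-Hilbert module over a quantale. -/
structure PreHilbertModule {Q : Type*} [CompleteLattice Q] (Qs : IQuantale Q)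
    (X : Type*) [CompleteLattice X] extends QuantaleModule Qs X where
  inner : X → X → Q
  inner_act : ∀ a x y, inner (act a x) y = Qs.mul a (inner x y)
  sSup_inner : ∀ (S : Set X) (y : X), inner (sSup S) y = ⨆ x ∈ S, inner x y
  inner_star : ∀ x y, inner x y = Qs.star (inner y x)

namespace PreHilbertModule

variable {Q X : Type*} [CompleteLattice Q] [CompleteLattice X] {Qs : IQuantale Q}

/-- A Hilbert section: `⟨x,s⟩s ≤ x` for all `x`. -/
def IsHilbertSection (H : PreHilbertModule Qs X) (s : X) : Prop :=
  ∀ x, H.act (H.inner x s) s ≤ x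

/-- A regular element: `⟨s,s⟩s = s`. -/
def IsRegularSection (H : PreHilbertModule Qs X) (s : X) : Prop :=
  H.act (H.inner s s) s = s

/-- A Hilbert basis: `x = ⋁_{t ∈ S} ⟨x,t⟩t` for all `x`. -/
def IsHilbertBasis (H : PreHilbertModule Qs X) (S : Set X) : Prop :=
  ∀ x, x = ⨆ t ∈ S, H.act (H.inner x t) t

/-- Non-degeneracy of the inner product. -/
def Nondegenerate (H : PreHilbertModule Qs X) : Prop :=
  ∀ x y, (∀ z, H.inner x z = H.inner y z) → x = y

end PreHilbertModule

/-- A `Q`-locale over an inverse quantal frame: a module which is a frame and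
satisfies the anchor condition. -/
structure QLocale {Q : Type*} [Order.Frame Q] (Qf : InverseQuantalFrame Q)
    (X : Type*) [Order.Frame X] extends QuantaleModule Qf.toIQuantale X where
  anchor : ∀ b x, b ≤ Qf.e → act b x = act b ⊤ ⊓ x

/-- A `Q`-sheaf over an inverse quantal frame: a pre-Hilbert module which is a
frame, satisfies the anchor condition, and has a Hilbert basis. -/
structure QSheaf {Q : Type*} [Order.Frame Q] (Qf : InverseQuantalFrame Q)
    (X : Type*) [Order.Frame X] extends PreHilbertModule Qf.toIQuantale X where
  anchor : ∀ b x, b ≤ Qf.e → act b x = act b ⊤ ⊓ x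
  hasBasis : ∃ S : Set X, ∀ x, x = ⨆ t ∈ S, act (inner x t) t

namespace QSheaf

variable {Q X : Type*} [Order.Frame Q] [Order.Frame X] {Qf : InverseQuantalFrame Q}

/-- The support `ς_X(x) = ⟨x,x⟩ ∧ e` of a `Q`-sheaf. -/
def sppX (H : QSheaf Qf X) (x : X) : Q := H.inner x x ⊓ Qf.e

/-- A local section: `ς_X(x)s = x` for all `x ≤ s`. -/
def IsLocalSection (H : QSheaf Qf X) (s : X) : Prop :=
  ∀ x ≤ s, H.act (H.sppX x) s = x

/-- A principal section: a local section with `⟨s,s⟩ ≤ e`. -/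
def IsPrincipalSection (H : QSheaf Qf X) (s : X) : Prop :=
  H.IsLocalSection s ∧ H.inner s s ≤ Qf.e

/-- A right local section: `x = s ∧ 1_Q·x` for all `x ≤ s`. -/
def IsRightLocalSection (H : QSheaf Qf X) (s : X) : Prop :=
  ∀ x ≤ s, x = s ⊓ H.act ⊤ x

/-- A local bisection: simultaneously a local section and a right local section. -/
def IsBisection (H : QSheaf Qf X) (s : X) : Prop :=
  H.IsLocalSection s ∧ H.IsRightLocalSection s

end QSheaf


section Aux

namespace InverseQuantalFrame

variable {Q : Type*} [Order.Frame Q] (Qf : InverseQuantalFrame Q)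

lemma mul_mono {a a' b b' : Q} (h1 : a ≤ a') (h2 : b ≤ b') :
    Qf.mul a b ≤ Qf.mul a' b' := by
  have l : ∀ x x' y : Q, x ≤ x' → Qf.mul x y ≤ Qf.mul x' y := by
    intro x x' y h
    have hx : sSup {x, x'} = x' := by
      rw [sSup_pair, sup_eq_right.2 h]
    have := Qf.sSup_mul {x, x'} y
    rw [hx] at this
    rw [this]
    exact le_iSup₂_of_le x (by simp) le_rfl
  have r : ∀ x y y' : Q, y ≤ y' → Qf.mul x y ≤ Qf.mul x y' := by
    intro x y y' h
    have hx : sSup {y, y'} = y' := by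
      rw [sSup_pair, sup_eq_right.2 h]
    have := Qf.mul_sSup x {y, y'}
    rw [hx] at this
    rw [this]
    exact le_iSup₂_of_le y (by simp) le_rfl
  exact (l a a' b h1).trans (r a' b b' h2)

lemma star_mono {a a' : Q} (h : a ≤ a') : Qf.star a ≤ Qf.star a' := by
  have hx : sSup {a, a'} = a' := by rw [sSup_pair, sup_eq_right.2 h]
  have := Qf.star_sSup {a, a'}
  rw [hx] at this
  rw [this]
  exact le_iSup₂_of_le a (by simp) le_rfl

lemma supp_mono {a a' : Q} (h : a ≤ a') : Qf.supp a ≤ Qf.supp a' := by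
  have hx : sSup {a, a'} = a' := by rw [sSup_pair, sup_eq_right.2 h]
  have := Qf.supp_sSup {a, a'}
  rw [hx] at this
  rw [this]
  exact le_iSup₂_of_le a (by simp) le_rfl

lemma star_e : Qf.star Qf.e = Qf.e := by
  have key : ∀ a : Q, Qf.mul (Qf.star Qf.e) a = a := by
    intro a
    conv_lhs => rw [← Qf.star_star a]
    rw [← Qf.star_mul, Qf.mul_e, Qf.star_star]
  have := key Qf.e
  rw [Qf.mul_e] at this
  exact this

lemma star_of_le_e {b : Q} (h : b ≤ Qf.e) : Qf.star b = b := by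
  have hb : ∀ c : Q, c ≤ Qf.e → c ≤ Qf.star c := by
    intro c hc
    have h1 : c ≤ Qf.mul (Qf.supp c) c := Qf.le_supp_mul c
    have h2 : Qf.mul (Qf.supp c) c ≤ Qf.mul (Qf.mul c (Qf.star c)) c :=
      Qf.mul_mono (Qf.supp_le_mul_star c) le_rfl
    have h3 : Qf.mul (Qf.mul c (Qf.star c)) c ≤ Qf.mul (Qf.mul Qf.e (Qf.star c)) Qf.e :=
      Qf.mul_mono (Qf.mul_mono hc le_rfl) hc
    rw [Qf.e_mul, Qf.mul_e] at h3
    exact h1.trans (h2.trans h3)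
  have h1 : b ≤ Qf.star b := hb b h
  have h2 : Qf.star b ≤ Qf.e := by
    have := Qf.star_mono h
    rwa [Qf.star_e] at this
  have h3 : Qf.star b ≤ Qf.star (Qf.star b) := hb _ h2
  rw [Qf.star_star] at h3
  exact le_antisymm h3 h1

lemma strip {b a : Q} (h : b ≤ Qf.e) : Qf.mul b ⊤ ⊓ a ≤ Qf.mul b a := by
  set c := Qf.mul b ⊤ ⊓ a with hc
  have h1 : c ≤ Qf.mul (Qf.supp c) c := Qf.le_supp_mul c
  have h2 : Qf.supp c ≤ b := by
    have h3 : Qf.supp c ≤ Qf.supp (Qf.mul b ⊤) := Qf.supp_mono inf_le_left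
    rw [Qf.supp_stable b ⊤ h] at h3
    have h4 : Qf.mul b (Qf.supp ⊤) ≤ Qf.mul b Qf.e :=
      Qf.mul_mono le_rfl (Qf.supp_le_e ⊤)
    rw [Qf.mul_e] at h4
    exact h3.trans h4
  exact h1.trans (Qf.mul_mono h2 inf_le_right)

lemma le_mul_star_mul (a : Q) : a ≤ Qf.mul (Qf.mul a (Qf.star a)) a :=
  (Qf.le_supp_mul a).trans (Qf.mul_mono (Qf.supp_le_mul_star a) le_rfl)

lemma le_mul_supp_star (a : Q) : a ≤ Qf.mul a (Qf.supp (Qf.star a)) := by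
  have h1 : Qf.star a ≤ Qf.mul (Qf.supp (Qf.star a)) (Qf.star a) :=
    Qf.le_supp_mul (Qf.star a)
  have h2 := Qf.star_mono h1
  rw [Qf.star_mul, Qf.star_star] at h2
  rwa [Qf.star_of_le_e (Qf.supp_le_e (Qf.star a))] at h2

end InverseQuantalFrame

namespace QSheaf

variable {Q X : Type*} [Order.Frame Q] [Order.Frame X] {Qf : InverseQuantalFrame Q}
variable (H : QSheaf Qf X)

lemma act_mono {a a' : Q} {x x' : X} (h1 : a ≤ a') (h2 : x ≤ x') :
    H.act a x ≤ H.act a' x' := by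
  have l : ∀ (b b' : Q) (y : X), b ≤ b' → H.act b y ≤ H.act b' y := by
    intro b b' y h
    have hx : sSup {b, b'} = b' := by rw [sSup_pair, sup_eq_right.2 h]
    have := H.sSup_act {b, b'} y
    rw [hx] at this
    rw [this]
    exact le_iSup₂_of_le b (by simp) le_rfl
  have r : ∀ (b : Q) (y y' : X), y ≤ y' → H.act b y ≤ H.act b y' := by
    intro b y y' h
    have hx : sSup {y, y'} = y' := by rw [sSup_pair, sup_eq_right.2 h]
    have := H.act_sSup b {y, y'}
    rw [hx] at this
    rw [this]
    exact le_iSup₂_of_le y (by simp) le_rfl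
  exact (l a a' x h1).trans (r a' x x' h2)

lemma inner_mono_left {x x' : X} (y : X) (h : x ≤ x') :
    H.inner x y ≤ H.inner x' y := by
  have hx : sSup {x, x'} = x' := by rw [sSup_pair, sup_eq_right.2 h]
  have := H.sSup_inner {x, x'} y
  rw [hx] at this
  rw [this]
  exact le_iSup₂_of_le x (by simp) le_rfl

lemma star_inner (x y : X) : Qf.star (H.inner x y) = H.inner y x :=
  (H.inner_star y x).symm

lemma inner_act_right (x : X) (a : Q) (y : X) :
    H.inner x (H.act a y) = Qf.mul (H.inner x y) (Qf.star a) := by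
  rw [H.inner_star, H.inner_act, Qf.star_mul, ← H.inner_star]

lemma inner_mono_right {y y' : X} (x : X) (h : y ≤ y') :
    H.inner x y ≤ H.inner x y' := by
  rw [← H.star_inner y x, ← H.star_inner y' x]
  exact Qf.star_mono (H.inner_mono_left x h)

variable {S : Set X} (hS : ∀ x : X, x = ⨆ t ∈ S, H.act (H.inner x t) t)

include hS

lemma basis_term_le {u : X} (hu : u ∈ S) (x : X) :
    H.act (H.inner x u) u ≤ x := by
  conv_rhs => rw [hS x]
  exact le_iSup₂_of_le u hu le_rfl

lemma le_act_spp (x : X) : x ≤ H.act (H.inner x x ⊓ Qf.e) x := by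
  conv_lhs => rw [hS x]
  apply iSup₂_le
  intro v hv
  have hsupp : Qf.supp (H.inner x v) ≤ H.inner x x ⊓ Qf.e := by
    apply le_inf _ (Qf.supp_le_e _)
    have h1 : Qf.supp (H.inner x v) ≤ Qf.mul (H.inner x v) (Qf.star (H.inner x v)) :=
      Qf.supp_le_mul_star _
    rw [H.star_inner] at h1
    have h2 : Qf.mul (H.inner x v) (H.inner v x) = H.inner (H.act (H.inner x v) v) x :=
      (H.inner_act _ _ _).symm
    rw [h2] at h1
    exact h1.trans (H.inner_mono_left x (H.basis_term_le hS hv x))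
  have h3 : H.inner x v ≤ Qf.mul (H.inner x x ⊓ Qf.e) (H.inner x v) :=
    (Qf.le_supp_mul _).trans (Qf.mul_mono hsupp le_rfl)
  calc H.act (H.inner x v) v
      ≤ H.act (Qf.mul (H.inner x x ⊓ Qf.e) (H.inner x v)) v := H.act_mono h3 le_rfl
    _ = H.act (H.inner x x ⊓ Qf.e) (H.act (H.inner x v) v) := H.act_mul _ _ _
    _ ≤ H.act (H.inner x x ⊓ Qf.e) x := H.act_mono le_rfl (H.basis_term_le hS hv x)

lemma top_inner_le {u : X} (hu : u ∈ S) :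
    H.inner ⊤ u ⊓ Qf.e ≤ H.inner u u := by
  set d := H.inner ⊤ u ⊓ Qf.e with hd
  have hde : d ≤ Qf.e := inf_le_right
  have hd2 : d ≤ H.inner u ⊤ := by
    have := Qf.star_mono (inf_le_left : d ≤ H.inner ⊤ u)
    rwa [Qf.star_of_le_e hde, H.star_inner] at this
  have h1 : H.inner u ⊤ ≤ Qf.mul (H.inner u u ⊓ Qf.e) ⊤ := by
    have h2 : H.inner u ⊤ ≤ H.inner (H.act (H.inner u u ⊓ Qf.e) u) ⊤ :=
      H.inner_mono_left ⊤ (H.le_act_spp hS u)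
    rw [H.inner_act] at h2
    exact h2.trans (Qf.mul_mono le_rfl le_top)
  have h3 : d ≤ Qf.mul (H.inner u u ⊓ Qf.e) ⊤ ⊓ Qf.e := le_inf (hd2.trans h1) hde
  have h4 : Qf.mul (H.inner u u ⊓ Qf.e) ⊤ ⊓ Qf.e ≤ Qf.mul (H.inner u u ⊓ Qf.e) Qf.e :=
    Qf.strip inf_le_right
  rw [Qf.mul_e] at h4
  exact (h3.trans h4).trans inf_le_left

lemma key_pu {s u : X} (hu : u ∈ S) (hloc : H.IsLocalSection s)
    {k : Q} (hk : k ∈ Qf.toIQuantale.PU) (x : X) :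
    Qf.mul (H.inner x s) (H.inner s u ⊓ k) ≤ H.inner x u := by
  set m := H.inner s u ⊓ k with hm
  set r := H.act m u with hr
  have hrs : r ≤ s :=
    (H.act_mono (inf_le_left : m ≤ H.inner s u) le_rfl).trans (H.basis_term_le hS hu s)
  have hlocr : H.act (H.sppX r) s = r := hloc r hrs
  -- m ≤ m⟨u,u⟩
  have hm_mul : m ≤ Qf.mul m (H.inner u u) := by
    have h1 : m ≤ Qf.mul m (Qf.supp (Qf.star m)) := Qf.le_mul_supp_star m
    have h2 : Qf.supp (Qf.star m) ≤ H.inner u u := by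
      have h3 : Qf.supp (Qf.star m) ≤ Qf.mul (Qf.star m) m := by
        have := Qf.supp_le_mul_star (Qf.star m)
        rwa [Qf.star_star] at this
      have h4 : Qf.mul (Qf.star m) m ≤ Qf.mul (H.inner u s) (H.inner s u) := by
        apply Qf.mul_mono _ inf_le_left
        have := Qf.star_mono (inf_le_left : m ≤ H.inner s u)
        rwa [H.star_inner] at this
      have h5 : Qf.mul (H.inner u s) (H.inner s u) ≤ H.inner ⊤ u := by
        rw [← H.inner_act]
        exact H.inner_mono_left u le_top
      have h6 : Qf.supp (Qf.star m) ≤ H.inner ⊤ u ⊓ Qf.e :=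
        le_inf (h3.trans (h4.trans h5)) (Qf.supp_le_e _)
      exact h6.trans (H.top_inner_le hS hu)
    exact h1.trans (Qf.mul_mono le_rfl h2)
  -- ⟨r,r⟩ = (m⟨u,u⟩)m*
  have hrr : H.inner r r = Qf.mul (Qf.mul m (H.inner u u)) (Qf.star m) := by
    rw [hr, H.inner_act, H.inner_act_right, ← Qf.mul_assoc]
  -- mm* ≤ ςr
  have hmm : Qf.mul m (Qf.star m) ≤ H.sppX r := by
    apply le_inf
    · rw [hrr]
      exact Qf.mul_mono hm_mul le_rfl
    · have h1 : Qf.mul m (Qf.star m) ≤ Qf.mul k (Qf.star k) :=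
        Qf.mul_mono inf_le_right (Qf.star_mono inf_le_right)
      exact h1.trans hk.1
  have h3 : m ≤ Qf.mul (H.sppX r) m :=
    (Qf.le_mul_star_mul m).trans (Qf.mul_mono hmm le_rfl)
  have h4 : Qf.mul (H.inner x s) (H.sppX r) = Qf.mul (H.inner x u) (Qf.star m) := by
    have h5 : Qf.star (H.sppX r) = H.sppX r := Qf.star_of_le_e inf_le_right
    calc Qf.mul (H.inner x s) (H.sppX r)
        = H.inner x (H.act (H.sppX r) s) := by rw [H.inner_act_right, h5]
      _ = H.inner x r := by rw [hlocr]
      _ = Qf.mul (H.inner x u) (Qf.star m) := by rw [hr, H.inner_act_right]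
  calc Qf.mul (H.inner x s) m
      ≤ Qf.mul (H.inner x s) (Qf.mul (H.sppX r) m) := Qf.mul_mono le_rfl h3
    _ = Qf.mul (Qf.mul (H.inner x s) (H.sppX r)) m := (Qf.mul_assoc _ _ _).symm
    _ = Qf.mul (Qf.mul (H.inner x u) (Qf.star m)) m := by rw [h4]
    _ = Qf.mul (H.inner x u) (Qf.mul (Qf.star m) m) := Qf.mul_assoc _ _ _
    _ ≤ Qf.mul (H.inner x u) Qf.e := by
        apply Qf.mul_mono le_rfl
        have h6 : Qf.mul (Qf.star m) m ≤ Qf.mul (Qf.star k) k :=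
          Qf.mul_mono (Qf.star_mono inf_le_right) inf_le_right
        exact h6.trans hk.2
    _ = H.inner x u := Qf.mul_e _

lemma inner_trans {s u : X} (hu : u ∈ S) (hloc : H.IsLocalSection s) (x : X) :
    Qf.mul (H.inner x s) (H.inner s u) ≤ H.inner x u := by
  have h1 : H.inner s u = ⨆ k ∈ Qf.toIQuantale.PU, (H.inner s u ⊓ k) := by
    rw [← inf_sSup_eq]
    have : sSup (Qf.toIQuantale.PU) = ⊤ := Qf.sSup_PU
    rw [this, inf_top_eq]
  rw [h1]
  have h2 : (⨆ k ∈ Qf.toIQuantale.PU, (H.inner s u ⊓ k)) =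
      sSup ((fun k => H.inner s u ⊓ k) '' Qf.toIQuantale.PU) := by
    rw [sSup_image]
  rw [h2, Qf.mul_sSup]
  apply iSup₂_le
  rintro b ⟨k, hk, rfl⟩
  exact H.key_pu hS hu hloc hk x

lemma hilbert_section {s : X} (hloc : H.IsLocalSection s) (x : X) :
    H.act (H.inner x s) s ≤ x := by
  have hexp : s = sSup ((fun u => H.act (H.inner s u) u) '' S) := by
    rw [sSup_image]
    exact hS s
  calc H.act (H.inner x s) s
      = H.act (H.inner x s) (sSup ((fun u => H.act (H.inner s u) u) '' S)) := by
        rw [← hexp]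
    _ = ⨆ y ∈ (fun u => H.act (H.inner s u) u) '' S, H.act (H.inner x s) y :=
        H.act_sSup _ _
    _ ≤ x := by
        apply iSup₂_le
        rintro y ⟨u, hu, rfl⟩
        rw [← H.act_mul]
        calc H.act (Qf.mul (H.inner x s) (H.inner s u)) u
            ≤ H.act (H.inner x u) u := H.act_mono (H.inner_trans hS hu hloc x) le_rfl
          _ ≤ x := H.basis_term_le hS hu x

end QSheaf

end Aux

/-- The inner product of two principal sections of a `Q`-sheaf is
a partial unit. -/
theorem stmt10 {Q X : Type*} [Order.Frame Q] [Order.Frame X]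
    (Qf : InverseQuantalFrame Q) (H : QSheaf Qf X)
    (s t : X) (hs : H.IsPrincipalSection s) (ht : H.IsPrincipalSection t) :
    H.inner s t ∈ Qf.toIQuantale.PU := by
  obtain ⟨S, hS⟩ := H.hasBasis
  refine ⟨?_, ?_⟩
  · show Qf.mul (H.inner s t) (Qf.star (H.inner s t)) ≤ Qf.e
    rw [H.star_inner, ← H.inner_act]
    exact (H.inner_mono_left s (H.hilbert_section hS ht.1 s)).trans hs.2
  · show Qf.mul (Qf.star (H.inner s t)) (H.inner s t) ≤ Qf.e
    rw [H.star_inner, ← H.inner_act]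
    exact (H.inner_mono_left t (H.hilbert_section hS hs.1 t)).trans ht.2
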